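/- Let R be a DVR with uniformizer π and residue field k of characteristic ≠ 2, and n ≥ 3, k fixed in {1,...,n}. Then the ring A = R[x₁,...,xₙ,y]/(y·(∑xᵢ²) − 2π, xₖ − 1) is flat over R. -/

import Mathlib

open TensorProduct LinearMap

/-- Over a PID, a torsion-free module is flat. -/
theorem flat_of_isSMulRegular {R M : Type*} [CommRing R] [IsDomain R] [IsPrincipalIdealRing R]
    [AddCommGroup M] [Module R M] (hreg : ∀ a : R, a ≠ 0 → IsSMulRegular M a) :
    Module.Flat R M := by
  rw [Module.Flat.iff_rTensor_injective']
  intro J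
  obtain ⟨a, rfl⟩ := (IsPrincipalIdealRing.principal J).principal
  by_cases ha : a = 0
  · subst ha
    intro x y hxy
    have hs : Subsingleton (Submodule.span R ({0} : Set R)) := by
      rw [Submodule.span_zero_singleton]; infer_instance
    have : Subsingleton ((Submodule.span R ({0} : Set R)) ⊗[R] M) := by
      infer_instance
    exact Subsingleton.elim x y
  · set e := LinearEquiv.toSpanNonzeroSingleton R R a ha
    set E := TensorProduct.congr e (LinearEquiv.refl R M)
    have key : ∀ z : R ⊗[R] M,
        (TensorProduct.lid R M) (rTensor M (Submodule.span R {a}).subtype (E z))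
          = a • (TensorProduct.lid R M z) := by
      intro z
      induction z using TensorProduct.induction_on with
      | zero => simp
      | tmul r m =>
          simp only [E, e, TensorProduct.congr_tmul, LinearEquiv.refl_apply, rTensor_tmul,
            Submodule.coe_subtype, TensorProduct.lid_tmul,
            LinearEquiv.toSpanNonzeroSingleton_apply, smul_eq_mul, smul_smul]
          ring_nf
      | add x y hx hy =>
          rw [map_add, map_add, map_add, hx, hy, map_add, smul_add]
    intro x y hxy
    obtain ⟨x', rfl⟩ := E.surjective x
    obtain ⟨y', rfl⟩ := E.surjective y
    have h2 : a • (TensorProduct.lid R M x') = a • (TensorProduct.lid R M y') := by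
      rw [← key, ← key, hxy]
    have := hreg a ha h2
    have : x' = y' := (TensorProduct.lid R M).injective this
    rw [this]

open MvPolynomial

theorem stmt_9 {R : Type*} [CommRing R] [IsDomain R] [IsDiscreteValuationRing R]
    (π : R) (hπ : Irreducible π)
    (hchar : ringChar (IsLocalRing.ResidueField R) ≠ 2)
    (n : ℕ) (hn : 3 ≤ n) (c : Fin n)
    (I : Ideal (MvPolynomial (Fin n ⊕ Unit) R))
    (hI : I = Ideal.span
      {X (Sum.inr ()) * (∑ i : Fin n, (X (Sum.inl i)) ^ 2) - C (2 * π),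
       X (Sum.inl c) - 1}) :
    Module.Flat R (MvPolynomial (Fin n ⊕ Unit) R ⧸ I) := by
  classical
  set P := MvPolynomial (Fin n ⊕ Unit) R
  set f : P := X (Sum.inr ()) * (∑ i : Fin n, (X (Sum.inl i)) ^ 2) - C (2 * π) with hf
  set g : P := X (Sum.inl c) - 1 with hg
  -- the substitution x_c ↦ 1
  set φ : P →ₐ[R] P := aeval (fun i => if i = Sum.inl c then 1 else X i) with hφ
  have hφX : ∀ i, φ (X i) = if i = Sum.inl c then 1 else X i := by
    intro i; exact aeval_X _ i
  -- every q is congruent to φ q mod (g)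
  have hcong : ∀ q : P, q - φ q ∈ Ideal.span {g} := by
    intro q
    induction q using MvPolynomial.induction_on with
    | C r =>
        have : φ (C r) = C r := by
          rw [show φ (C r) = aeval (fun i => if i = Sum.inl c then 1 else X i) (C r) from rfl,
            aeval_C, MvPolynomial.algebraMap_eq]
        rw [this, sub_self]
        exact zero_mem _
    | add p q hp hq =>
        have : p + q - φ (p + q) = (p - φ p) + (q - φ q) := by rw [map_add]; ring
        rw [this]; exact add_mem hp hq
    | mul_X p i hp =>
        have : p * X i - φ (p * X i) = (p - φ p) * X i + φ p * (X i - φ (X i)) := by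
          rw [map_mul]; ring
        rw [this]
        refine add_mem (Ideal.mul_mem_right _ _ hp) ?_
        rcases eq_or_ne i (Sum.inl c) with h | h
        · subst h
          rw [hφX]
          simp only [if_pos rfl]
          exact Ideal.mul_mem_left _ _ (Ideal.subset_span rfl)
        · rw [hφX, if_neg h]
          simp
  have hCp : ∀ r : R, φ (C r) = C r := by
    intro r
    rw [show φ (C r) = aeval (fun i => if i = Sum.inl c then 1 else X i) (C r) from rfl,
      aeval_C, MvPolynomial.algebraMap_eq]
  -- π does not divide φ f
  have hndvd : ¬ (C π : P) ∣ φ f := by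
    have hφf : φ f = X (Sum.inr ()) *
        (∑ i : Fin n, (if i = c then (1:P) else X (Sum.inl i))^2) - C (2*π) := by
      rw [hf, map_sub, map_mul, map_sum]
      rw [hφX, if_neg (by simp)]
      congr 1
      · congr 1
        apply Finset.sum_congr rfl
        intro i _
        rw [map_pow, hφX]
        simp [Sum.inl.injEq]
      · exact hCp (2*π)
    have hco : coeff (Finsupp.single (Sum.inr ()) 1) (φ f) = 1 := by
      rw [hφf, coeff_sub]
      rw [show (Finsupp.single (Sum.inr () : Fin n ⊕ Unit) 1)
            = Finsupp.single (Sum.inr ()) 1 + 0 from (add_zero _).symm]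
      rw [coeff_X_mul, coeff_sum]
      have hterm : ∀ x : Fin n, coeff (0 : (Fin n ⊕ Unit) →₀ ℕ)
          (((if x = c then 1 else X (Sum.inl x)) : P) ^ 2) = if x = c then 1 else 0 := by
        intro x
        split
        · simp
        · rw [coeff_X_pow]
          simp [Finsupp.single_eq_zero]
      rw [Finset.sum_congr rfl (fun x _ => hterm x), coeff_C,
        if_neg (fun h => absurd (DFunLike.congr_fun h (Sum.inr ())) (by simp)), sub_zero]
      simp
    intro hdvd
    rw [MvPolynomial.C_dvd_iff_dvd_coeff] at hdvd
    have h1 := hdvd (Finsupp.single (Sum.inr ()) 1)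
    rw [hco] at h1
    exact hπ.not_isUnit (isUnit_of_dvd_one h1)
  have hπp : Prime π := UniqueFactorizationMonoid.irreducible_iff_prime.mp hπ
  have hCπ : Prime (C π : P) := by
    rw [MvPolynomial.prime_C_iff]
    exact hπp
  -- key: π is regular mod I
  have key : ∀ p : P, C π * p ∈ I → p ∈ I := by
    intro p hp
    rw [hI, Ideal.mem_span_pair] at hp
    obtain ⟨a, b, hab⟩ := hp
    have hg0 : φ g = 0 := by
      rw [hg, map_sub, hφX, if_pos rfl, map_one, sub_self]
    have h1 : C π * φ p = φ a * φ f := by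
      have h := congrArg φ hab
      rw [map_add, map_mul, map_mul, map_mul, hg0, mul_zero, add_zero, hCp] at h
      rw [h]
    have hdvd : (C π : P) ∣ φ a * φ f := ⟨φ p, h1.symm⟩
    obtain ⟨a', ha'⟩ := (hCπ.2.2 _ _ hdvd).resolve_right hndvd
    have h2 : φ p = a' * φ f := by
      have hπ0 : (C π : P) ≠ 0 := hCπ.1
      apply mul_left_cancel₀ hπ0
      rw [h1, ha']; ring
    have hspan : Ideal.span {g} ≤ I := by
      rw [hI]; exact Ideal.span_mono (by simp)
    have hfI : f ∈ I := by rw [hI]; exact Ideal.subset_span (by simp)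
    have : p = (p - φ p) + a' * (φ f - f) + a' * f := by rw [h2]; ring
    rw [this]
    refine add_mem (add_mem (hspan (hcong p)) ?_) (Ideal.mul_mem_left _ _ hfI)
    exact Ideal.mul_mem_left _ _ (hspan (by simpa [neg_sub] using neg_mem (hcong f)))
  -- regularity of all nonzero scalars
  apply flat_of_isSMulRegular
  intro a ha
  obtain ⟨k, u, rfl⟩ := IsDiscreteValuationRing.eq_unit_mul_pow_irreducible ha hπ
  have hπreg : IsSMulRegular (P ⧸ I) π := by
    intro x y hxy
    obtain ⟨p, rfl⟩ := Ideal.Quotient.mk_surjective x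
    obtain ⟨q, rfl⟩ := Ideal.Quotient.mk_surjective y
    have hsm : ∀ r : P, π • (Ideal.Quotient.mk I r) = Ideal.Quotient.mk I (C π * r) := by
      intro r
      rw [← smul_eq_C_mul]
      exact (Submodule.Quotient.mk_smul _ π r).symm
    replace hxy : π • (Ideal.Quotient.mk I p) = π • (Ideal.Quotient.mk I q) := hxy
    rw [hsm, hsm] at hxy
    rw [Ideal.Quotient.eq] at hxy ⊢
    have : C π * p - C π * q = C π * (p - q) := by ring
    rw [this] at hxy
    exact key _ hxy
  exact (Units.isSMulRegular (M := P ⧸ I) u).mul (hπreg.pow k)
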